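/- If X is a compact connected metric space and X \ {x} has at least three connected components for some point x ∈ X, and X is arcwise connected, then X contains a topological embedding of the letter Y centered at x. -/

import Mathlib

open Metric Set Topology

noncomputable section

/-- Euclidean 3-space. -/
abbrev E3 : Type := EuclideanSpace ℝ (Fin 3)

/-- The endpoint `e_i` of the triod. -/
def triodPt (i : Fin 3) : E3 := EuclideanSpace.single i 1

/-- The letter "Y": the union of the three unit segments `[0, e_i]` in `ℝ³`. -/
def Triod : Set E3 := ⋃ i : Fin 3, segment ℝ 0 (triodPt i)

/-- The leg `[0, e_i]` of the triod, as a subset of the triod. -/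
def triodLeg (i : Fin 3) : Set Triod := {p | (p : E3) ∈ segment ℝ 0 (triodPt i)}

/-- The endpoint `e_i`, as a point of the triod. -/
def triodEnd (i : Fin 3) : Triod :=
  ⟨triodPt i, Set.mem_iUnion.2 ⟨i, right_mem_segment ℝ 0 (triodPt i)⟩⟩

/-- The center `o` of the triod. -/
def triodCenter : Triod :=
  ⟨0, Set.mem_iUnion.2 ⟨0, left_mem_segment ℝ 0 (triodPt 0)⟩⟩

/-- An open set `U` of a metric space has a `c`-antenna if there is a topological
embedding `h` of the triod into `U` such that for every permutation `(i,j,k)` of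
`(1,2,3)` the distance from `h(e_i)` to `h([0,e_j]) ∪ h([0,e_k])` is at least
`c * diam U`. -/
def HasAntenna {X : Type*} [MetricSpace X] (c : ℝ) (U : Set X) : Prop :=
  ∃ h : Triod → X, IsEmbedding h ∧ Set.range h ⊆ U ∧
    ∀ i j k : Fin 3, i ≠ j → j ≠ k → i ≠ k →
      c * Metric.diam U ≤
        Metric.infDist (h (triodEnd i)) (h '' (triodLeg j ∪ triodLeg k))

/-- `X` is `c`-antenna-like if every ball of radius `r < diam X / 2` has a `c`-antenna. -/
def AntennaLike (X : Type*) [MetricSpace X] (c : ℝ) : Prop :=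
  ∀ (x : X) (r : ℝ), 0 < r → r < Metric.diam (Set.univ : Set X) / 2 →
    HasAntenna c (Metric.ball x r)

lemma mem_seg_iff {p : E3} {i : Fin 3} :
    p ∈ segment ℝ 0 (triodPt i) ↔ ∃ t ∈ Icc (0:ℝ) 1, p = t • triodPt i := by
  rw [segment_eq_image]
  constructor
  · rintro ⟨t, ht, rfl⟩; exact ⟨t, ht, by simp⟩
  · rintro ⟨t, ht, rfl⟩; exact ⟨t, ht, by simp⟩

lemma smul_pt_apply (t : ℝ) (i j : Fin 3) :
    (t • triodPt i) j = if j = i then t else 0 := by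
  simp [triodPt, EuclideanSpace.single_apply, mul_comm]

lemma leg_coord {p : Triod} {i : Fin 3} (hp : p ∈ triodLeg i) :
    (p : E3) i ∈ Icc (0:ℝ) 1 ∧ (p : E3) = ((p : E3) i) • triodPt i
      ∧ ∀ j, j ≠ i → (p : E3) j = 0 := by
  obtain ⟨t, ht, hpt⟩ := mem_seg_iff.mp hp
  have hi : (p : E3) i = t := by rw [hpt, smul_pt_apply]; simp
  refine ⟨hi ▸ ht, by rw [hi, ← hpt], fun j hj => by rw [hpt, smul_pt_apply]; simp [hj]⟩

lemma seg_compact (i : Fin 3) : IsCompact (segment ℝ 0 (triodPt i)) := by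
  rw [segment_eq_image]
  exact isCompact_Icc.image (by continuity)

lemma triod_compactSpace : CompactSpace Triod :=
  isCompact_iff_compactSpace.mp (isCompact_iUnion seg_compact)

lemma leg_closed (i : Fin 3) : IsClosed (triodLeg i) :=
  ((seg_compact i).isClosed).preimage continuous_subtype_val

lemma exists_leg (p : Triod) : ∃ i, p ∈ triodLeg i := by
  obtain ⟨i, hi⟩ := mem_iUnion.mp p.2
  exact ⟨i, hi⟩

lemma leg_union : ⋃ i, triodLeg i = (univ : Set Triod) :=
  eq_univ_of_forall fun p => mem_iUnion.mpr (exists_leg p)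

/-- If `X` is a compact connected arcwise connected metric space and `X \ {x}` has
at least three connected components, then `X` contains an embedded triod centered
at `x`. -/
theorem triod_of_three_components {X : Type*} [MetricSpace X] [CompactSpace X]
    [ConnectedSpace X]
    (harc : ∀ x y : X, x ≠ y → ∃ γ : unitInterval → X,
      IsEmbedding γ ∧ γ 0 = x ∧ γ 1 = y)
    (x y₁ y₂ y₃ : X) (h₁ : y₁ ≠ x) (h₂ : y₂ ≠ x) (h₃ : y₃ ≠ x)
    (h₁₂ : connectedComponentIn {x}ᶜ y₁ ≠ connectedComponentIn {x}ᶜ y₂)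
    (h₁₃ : connectedComponentIn {x}ᶜ y₁ ≠ connectedComponentIn {x}ᶜ y₃)
    (h₂₃ : connectedComponentIn {x}ᶜ y₂ ≠ connectedComponentIn {x}ᶜ y₃) :
    ∃ h : Triod → X, IsEmbedding h ∧ h triodCenter = x := by
  classical
  haveI : CompactSpace Triod := triod_compactSpace
  set y : Fin 3 → X := ![y₁, y₂, y₃] with hy
  have hyx : ∀ i, y i ≠ x := by
    intro i; fin_cases i <;> simpa [hy]
  have hcomp : ∀ i j, i ≠ j →
      connectedComponentIn {x}ᶜ (y i) ≠ connectedComponentIn {x}ᶜ (y j) := by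
    intro i j hij
    fin_cases i <;> fin_cases j <;>
      simp_all [hy] <;>
      first
        | exact h₁₂ | exact h₁₃ | exact h₂₃
        | exact fun e => h₁₂ e.symm | exact fun e => h₁₃ e.symm
        | exact fun e => h₂₃ e.symm
  obtain ⟨γ, hγemb, hγ0, hγ1⟩ :
      ∃ γ : Fin 3 → unitInterval → X,
        (∀ i, IsEmbedding (γ i)) ∧ (∀ i, γ i 0 = x) ∧ (∀ i, γ i 1 = y i) := by
    choose γ hA hB hC using fun i => harc x (y i) (hyx i).symm
    exact ⟨γ, hA, hB, hC⟩
  have hmem : ∀ i (t : unitInterval), t ≠ 0 →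
      γ i t ∈ connectedComponentIn {x}ᶜ (y i) := by
    intro i t ht
    set δ : ℝ → X := fun s => γ i (Set.projIcc 0 1 zero_le_one s) with hδ
    have hδc : Continuous δ := (hγemb i).continuous.comp continuous_projIcc
    have hne : ∀ s ∈ Ioc (0:ℝ) 1, δ s ≠ x := by
      intro s hs hxeq
      have h0 : Set.projIcc (0:ℝ) 1 zero_le_one s = 0 :=
        (hγemb i).injective (by rw [hγ0 i]; exact hxeq)
      have h0' : (Set.projIcc (0:ℝ) 1 zero_le_one s : ℝ) = 0 := congrArg Subtype.val h0
      rw [Set.coe_projIcc, min_eq_right hs.2, max_eq_right hs.1.le] at h0'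
      exact hs.1.ne' h0'
    have hIm : δ '' Ioc 0 1 ⊆ connectedComponentIn {x}ᶜ (y i) := by
      apply IsPreconnected.subset_connectedComponentIn
      · exact isPreconnected_Ioc.image δ hδc.continuousOn
      · refine ⟨1, right_mem_Ioc.2 zero_lt_one, ?_⟩
        show γ i (Set.projIcc 0 1 zero_le_one 1) = y i
        have h1 : Set.projIcc (0:ℝ) 1 zero_le_one 1 = 1 := by
          ext; simp [Set.coe_projIcc]
        rw [h1, hγ1 i]
      · rintro _ ⟨s, hs, rfl⟩
        exact hne s hs
    have ht' : (t : ℝ) ∈ Ioc (0:ℝ) 1 :=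
      ⟨lt_of_le_of_ne t.2.1 (fun e => ht (by ext; exact e.symm)), t.2.2⟩
    have heq : γ i t = δ (t : ℝ) := by
      show γ i t = γ i (Set.projIcc 0 1 zero_le_one (t : ℝ))
      rw [Set.projIcc_val]
    rw [heq]
    exact hIm ⟨(t : ℝ), ht', rfl⟩
  have hproj0 : Set.projIcc (0:ℝ) 1 zero_le_one 0 = 0 := by
    ext; simp [Set.coe_projIcc]
  let idx : Triod → Fin 3 := fun p =>
    if (p : E3) 1 ≠ 0 then 1 else if (p : E3) 2 ≠ 0 then 2 else 0
  let f : Fin 3 → Triod → X := fun i p => γ i (Set.projIcc 0 1 zero_le_one ((p : E3) i))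
  let h : Triod → X := fun p => f (idx p) p
  have hval : ∀ i (p : Triod), p ∈ triodLeg i → h p = f i p := by
    intro i p hp
    obtain ⟨hIcc, hrep, hzero⟩ := leg_coord hp
    by_cases h0 : (p : E3) i = 0
    · have hall : ∀ j, (p : E3) j = 0 := by
        intro j
        by_cases hj : j = i
        · rw [hj]; exact h0
        · exact hzero j hj
      have hfx : ∀ j, f j p = x := by
        intro j
        show γ j (Set.projIcc 0 1 zero_le_one ((p : E3) j)) = x
        rw [hall j, hproj0, hγ0 j]
      show f (idx p) p = f i p
      rw [hfx (idx p), hfx i]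
    · have hidx : idx p = i := by
        fin_cases i
        · show (if (p : E3) 1 ≠ 0 then (1:Fin 3) else if (p : E3) 2 ≠ 0 then 2 else 0) = _
          rw [if_neg (by simpa using hzero 1 (by decide)),
            if_neg (by simpa using hzero 2 (by decide))]
          rfl
        · show (if (p : E3) 1 ≠ 0 then (1:Fin 3) else if (p : E3) 2 ≠ 0 then 2 else 0) = _
          rw [if_pos (by simpa using h0)]
          rfl
        · show (if (p : E3) 1 ≠ 0 then (1:Fin 3) else if (p : E3) 2 ≠ 0 then 2 else 0) = _
          rw [if_neg (by simpa using hzero 1 (by decide)), if_pos (by simpa using h0)]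
          rfl
      show f (idx p) p = f i p
      rw [hidx]
  have hinj : Function.Injective h := by
    intro p q hpq
    obtain ⟨i, hpi⟩ := exists_leg p
    obtain ⟨j, hqj⟩ := exists_leg q
    obtain ⟨hpI, hpr, hpz⟩ := leg_coord hpi
    obtain ⟨hqI, hqr, hqz⟩ := leg_coord hqj
    have hp' : h p = γ i ⟨(p : E3) i, hpI⟩ := by
      rw [hval i p hpi]
      show γ i (Set.projIcc 0 1 zero_le_one ((p : E3) i)) = _
      rw [Set.projIcc_of_mem _ hpI]
    have hq' : h q = γ j ⟨(q : E3) j, hqI⟩ := by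
      rw [hval j q hqj]
      show γ j (Set.projIcc 0 1 zero_le_one ((q : E3) j)) = _
      rw [Set.projIcc_of_mem _ hqI]
    rw [hp', hq'] at hpq
    by_cases hij : i = j
    · subst hij
      have hc : (p : E3) i = (q : E3) i :=
        congrArg Subtype.val ((hγemb i).injective hpq)
      ext1
      rw [hpr, hqr, hc]
    · have hps : (⟨(p : E3) i, hpI⟩ : unitInterval) = 0 := by
        by_contra hs
        by_cases htq : (⟨(q : E3) j, hqI⟩ : unitInterval) = 0
        · have hx2 : γ j (⟨(q : E3) j, hqI⟩ : unitInterval) = x := by rw [htq, hγ0 j]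
          have hxin := hmem i _ hs
          rw [hpq, hx2] at hxin
          exact (connectedComponentIn_subset _ _ hxin) rfl
        · have hm1 := hmem i _ hs
          have hm2 := hmem j _ htq
          rw [hpq] at hm1
          exact hcomp i j hij
            ((connectedComponentIn_eq hm1).trans (connectedComponentIn_eq hm2).symm)
      have hqt : (⟨(q : E3) j, hqI⟩ : unitInterval) = 0 := by
        by_contra htq
        have hm2 := hmem j _ htq
        rw [hps, hγ0 i] at hpq
        exact (connectedComponentIn_subset _ _ hm2) hpq.symm
      have hc0p : (p : E3) i = 0 := congrArg Subtype.val hps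
      have hc0q : (q : E3) j = 0 := congrArg Subtype.val hqt
      ext1
      rw [hpr, hqr, hc0p, hc0q, zero_smul, zero_smul]
  have hcont : Continuous h := by
    apply (locallyFinite_of_finite triodLeg).continuous leg_union leg_closed
    intro i
    have hfc : Continuous (f i) :=
      (hγemb i).continuous.comp (continuous_projIcc.comp
        ((continuous_apply i).comp ((PiLp.continuous_ofLp 2 _).comp continuous_subtype_val)))
    exact hfc.continuousOn.congr (fun p hp => hval i p hp)
  refine ⟨h, (hcont.isClosedEmbedding hinj).toIsEmbedding, ?_⟩
  have hc : triodCenter ∈ triodLeg 0 := left_mem_segment ℝ 0 (triodPt 0)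
  rw [hval 0 triodCenter hc]
  show γ 0 (Set.projIcc 0 1 zero_le_one ((triodCenter : E3) 0)) = x
  have hz : ((triodCenter : E3) 0) = 0 := rfl
  rw [hz, hproj0, hγ0]
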